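/- arXiv:1812.08128 — 2 statements merged into one kernel-verified Lean document; each statement's English description precedes it below -/
import Mathlib

section
/- Every chordal graph with at least one edge contains an exposed edge, i.e., an edge contained in a unique maximal clique. -/
/-- `S` is a maximal clique of the simple graph `G`. -/
def IsMaxGraphClique {V : Type} (G : SimpleGraph V) (S : Set V) : Prop :=
  G.IsClique S ∧ ∀ T : Set V, G.IsClique T → S ⊆ T → S = T

/-- An edge `e` of `G` is exposed if it is contained in a unique maximal clique of `G`. -/
def IsExposedEdge {V : Type} (G : SimpleGraph V) (e : Sym2 V) : Prop :=
  e ∈ G.edgeSet ∧ ∃! S : Set V, IsMaxGraphClique G S ∧ ∀ v ∈ e, v ∈ S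

/-- An edge `e` of `G` is properly exposed if it is exposed and the unique maximal clique
containing it has more than two vertices. -/
def IsProperlyExposedEdge {V : Type} (G : SimpleGraph V) (e : Sym2 V) : Prop :=
  IsExposedEdge G e ∧
    ∀ S : Set V, IsMaxGraphClique G S → (∀ v ∈ e, v ∈ S) → 2 < S.ncard

/-- One edge erasure step: `H` is obtained from `G` by deleting a properly exposed edge. -/
def EdgeErasureStep {V : Type} (G H : SimpleGraph V) : Prop :=
  ∃ e, IsProperlyExposedEdge G e ∧ H = G.deleteEdges {e}

/-- `G` is chordal: every cycle of length at least four has a chord, i.e. `G` has no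
induced cycle of length four or more. -/
def IsChordalGraph {V : Type} (G : SimpleGraph V) : Prop :=
  ∀ (v : V) (w : G.Walk v v), w.IsCycle → 4 ≤ w.length →
    ∃ a b : V, a ∈ w.support ∧ b ∈ w.support ∧ G.Adj a b ∧ s(a, b) ∉ w.edges

open SimpleGraph Walk

section Aux

variable {V : Type} {G : SimpleGraph V}

/-- An edge at a simplicial vertex is exposed. -/
lemma exposed_of_simpl {v u : V} (h : G.Adj v u) (hs : G.IsClique (G.neighborSet v)) :
    IsExposedEdge G s(v, u) := by
  have hcl : G.IsClique (insert v (G.neighborSet v)) := by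
    intro z1 h1 z2 h2 hne
    rcases h1 with rfl | h1
    · rcases h2 with rfl | h2
      · exact absurd rfl hne
      · exact h2
    · rcases h2 with rfl | h2
      · exact (h1 : G.Adj z2 z1).symm
      · exact hs h1 h2 hne
  have hmax : IsMaxGraphClique G (insert v (G.neighborSet v)) := by
    refine ⟨hcl, fun T hT hsub => ?_⟩
    refine Set.Subset.antisymm hsub fun t ht => ?_
    by_cases htv : t = v
    · exact htv ▸ Set.mem_insert _ _
    · exact Set.mem_insert_of_mem _
        (hT (hsub (Set.mem_insert v _)) ht (fun hvt => htv hvt.symm))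
  refine ⟨h, insert v (G.neighborSet v), ⟨hmax, ?_⟩, ?_⟩
  · intro z hz
    rw [Sym2.mem_iff] at hz
    rcases hz with rfl | rfl
    · exact Set.mem_insert _ _
    · exact Set.mem_insert_of_mem _ h
  · rintro S ⟨hSmax, hmem⟩
    have hv : v ∈ S := hmem v (by simp)
    have hsub : S ⊆ insert v (G.neighborSet v) := by
      intro t ht
      by_cases htv : t = v
      · exact htv ▸ Set.mem_insert _ _
      · exact Set.mem_insert_of_mem _ (hSmax.1 hv ht (fun hvt => htv hvt.symm))
    exact hSmax.2 _ hcl hsub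

/-- Reachability from `a` avoiding the set `S`. -/
def Reach (G : SimpleGraph V) (S : Set V) (a v : V) : Prop :=
  ∃ w : G.Walk a v, ∀ z ∈ w.support, z ∉ S

/-- `S` separates `a` from `b`. -/
structure IsSep (G : SimpleGraph V) (a b : V) (S : Set V) : Prop where
  ha : a ∉ S
  hb : b ∉ S
  blocks : ∀ w : G.Walk a b, ∃ z ∈ w.support, z ∈ S

lemma IsSep.symm {a b : V} {S : Set V} (h : IsSep G a b S) : IsSep G b a S := by
  refine ⟨h.hb, h.ha, fun w => ?_⟩
  obtain ⟨z, hz, hzS⟩ := h.blocks w.reverse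
  rw [Walk.support_reverse, List.mem_reverse] at hz
  exact ⟨z, hz, hzS⟩

lemma Reach.not_mem {S : Set V} {a v : V} (h : Reach G S a v) : v ∉ S := by
  obtain ⟨w, hw⟩ := h
  exact hw v w.end_mem_support

lemma reach_refl {S : Set V} {a : V} (ha : a ∉ S) : Reach G S a a :=
  ⟨Walk.nil, by simpa using ha⟩

lemma Reach.symm {S : Set V} {a v : V} (h : Reach G S a v) : Reach G S v a := by
  obtain ⟨w, hw⟩ := h
  exact ⟨w.reverse, fun z hz => hw z (by rwa [Walk.support_reverse, List.mem_reverse] at hz)⟩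

lemma Reach.trans {S : Set V} {a u v : V} (h1 : Reach G S a u) (h2 : Reach G S u v) :
    Reach G S a v := by
  obtain ⟨w1, hw1⟩ := h1
  obtain ⟨w2, hw2⟩ := h2
  refine ⟨w1.append w2, fun z hz => ?_⟩
  rw [Walk.mem_support_append_iff] at hz
  rcases hz with hz | hz
  · exact hw1 z hz
  · exact hw2 z hz

lemma Reach.adj {S : Set V} {a v z : V} (h : Reach G S a v) (hadj : G.Adj v z) (hz : z ∉ S) :
    Reach G S a z := by
  refine h.trans ⟨Walk.cons hadj Walk.nil, ?_⟩
  intro t ht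
  simp only [Walk.support_cons, Walk.support_nil, List.mem_cons, List.mem_singleton] at ht
  rcases ht with rfl | rfl | h'
  · exact h.not_mem
  · exact hz
  · exact absurd h' (by simp at h')

lemma reach_of_mem_support {S : Set V} {a v z : V} {w : G.Walk a v}
    (hw : ∀ x ∈ w.support, x ∉ S) (hz : z ∈ w.support) : Reach G S a z := by
  classical
  exact ⟨w.takeUntil z hz, fun x hx => hw x (w.support_takeUntil_subset hz hx)⟩

lemma not_reach_of_sep {a b : V} {S : Set V} (hS : IsSep G a b S) : ¬ Reach G S a b := by
  rintro ⟨w, hw⟩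
  obtain ⟨z, hz, hzS⟩ := hS.blocks w
  exact hw z hz hzS

/-- For a minimal separator, each `x ∈ S` has a neighbor reachable from `a` avoiding `S`. -/
lemma sep_min_neighbor {a b : V} {S : Set V} (hS : IsSep G a b S) {x : V} (hx : x ∈ S)
    (hnm : ∃ w : G.Walk a b, ∀ z ∈ w.support, z ∈ S → z = x) :
    ∃ u, G.Adj x u ∧ Reach G S a u := by
  classical
  obtain ⟨w, hw⟩ := hnm
  have hpav : ∀ z ∈ w.bypass.support, z ∈ S → z = x :=
    fun z hz => hw z (w.support_bypass_subset hz)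
  have hxp : x ∈ w.bypass.support := by
    obtain ⟨z, hz, hzS⟩ := hS.blocks w.bypass
    exact (hpav z hz hzS) ▸ hz
  set q := w.bypass.takeUntil x hxp with hqdef
  have hqpath : q.IsPath := (w.bypass_isPath).takeUntil hxp
  have hqav : ∀ z ∈ q.support, z ∈ S → z = x :=
    fun z hz => hpav z (w.bypass.support_takeUntil_subset hxp hz)
  -- every vertex of q other than x is reachable from a avoiding S
  have hreach : ∀ z ∈ q.support, z ≠ x → Reach G S a z := by
    intro z hz hzx
    have hxnot : x ∉ (q.takeUntil z hz).support := by
      intro hxmem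
      have hsplit := q.take_spec hz
      have hnodup := hqpath.support_nodup
      rw [← hsplit, Walk.support_append] at hnodup
      have hdisj := List.disjoint_of_nodup_append hnodup
      have hx2 : x ∈ (q.dropUntil z hz).support.tail := by
        have hxdrop : x ∈ (q.dropUntil z hz).support := Walk.end_mem_support _
        rw [(q.dropUntil z hz).support_eq_cons] at hxdrop
        rcases List.mem_cons.mp hxdrop with h' | h'
        · exact absurd h' hzx.symm
        · exact h'
      exact hdisj hxmem hx2
    refine ⟨q.takeUntil z hz, fun t ht => ?_⟩
    intro htS
    have := hqav t (q.support_takeUntil_subset hz ht) htS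
    exact hxnot (this ▸ ht)
  -- x ≠ a
  have hax : x ≠ a := fun h => hS.ha (h ▸ hx)
  obtain ⟨u, hxu, w', hw'⟩ := Walk.exists_eq_cons_of_ne hax q.reverse
  have huq : u ∈ q.support := by
    have : u ∈ q.reverse.support := by
      rw [hw', Walk.support_cons]
      exact List.mem_cons_of_mem _ w'.start_mem_support
    rwa [Walk.support_reverse, List.mem_reverse] at this
  exact ⟨u, hxu, hreach u huq hxu.ne'⟩

lemma length_one_edge {u v : V} (w : G.Walk u v) (h : w.length = 1) : s(u, v) ∈ w.edges := by
  cases w with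
  | nil => simp at h
  | cons h' w' =>
    cases w' with
    | nil => simp
    | cons h'' w'' => simp [Walk.length_cons] at h

lemma adj_of_length_one {u v : V} (w : G.Walk u v) (h : w.length = 1) : G.Adj u v :=
  w.adj_of_mem_edges (length_one_edge w h)

/-- A chord of a walk yields a strictly shorter walk within the same support. -/
lemma shortcut {x y : V} (p : G.Walk x y) {d e : V} (hadj : G.Adj d e) :
    d ∈ p.support → e ∈ p.support → s(d, e) ∉ p.edges →
    ∃ q : G.Walk x y, (∀ z ∈ q.support, z ∈ p.support) ∧ q.length < p.length := by
  classical
  induction p with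
  | nil =>
    intro hd he _
    simp only [Walk.support_nil, List.mem_singleton] at hd he
    exact absurd (hd.trans he.symm) hadj.ne
  | @cons u c y h w ih =>
    intro hd he hne
    rw [Walk.support_cons, List.mem_cons] at hd he
    rw [Walk.edges_cons, List.mem_cons] at hne
    push_neg at hne
    obtain ⟨hne1, hne2⟩ := hne
    by_cases hdx : d = u
    · subst hdx
      have hew : e ∈ w.support := by
        rcases he with rfl | he
        · exact absurd rfl hadj.ne
        · exact he
      refine ⟨Walk.cons hadj (w.dropUntil e hew), ?_, ?_⟩
      · intro z hz
        rw [Walk.support_cons, List.mem_cons] at hz ⊢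
        rcases hz with rfl | hz
        · exact Or.inl rfl
        · exact Or.inr (w.support_dropUntil_subset hew hz)
      · rw [Walk.length_cons, Walk.length_cons, Nat.succ_lt_succ_iff]
        have hsplit : w.length = (w.takeUntil e hew).length + (w.dropUntil e hew).length := by
          conv_lhs => rw [← w.take_spec hew]
          rw [Walk.length_append]
        have htk : 1 ≤ (w.takeUntil e hew).length := by
          by_contra h0
          push_neg at h0
          have hce : c = e := Walk.eq_of_length_eq_zero (p := w.takeUntil e hew) (by omega)
          exact hne1 (by rw [hce])
        omega
    · by_cases hex : e = u
      · subst hex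
        have hdw : d ∈ w.support := by
          rcases hd with rfl | hd
          · exact absurd rfl hadj.ne
          · exact hd
        refine ⟨Walk.cons hadj.symm (w.dropUntil d hdw), ?_, ?_⟩
        · intro z hz
          rw [Walk.support_cons, List.mem_cons] at hz ⊢
          rcases hz with rfl | hz
          · exact Or.inl rfl
          · exact Or.inr (w.support_dropUntil_subset hdw hz)
        · rw [Walk.length_cons, Walk.length_cons, Nat.succ_lt_succ_iff]
          have hsplit : w.length = (w.takeUntil d hdw).length + (w.dropUntil d hdw).length := by
            conv_lhs => rw [← w.take_spec hdw]
            rw [Walk.length_append]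
          have htk : 1 ≤ (w.takeUntil d hdw).length := by
            by_contra h0
            push_neg at h0
            have hcd : c = d := Walk.eq_of_length_eq_zero (p := w.takeUntil d hdw) (by omega)
            exact hne1 (by rw [hcd, Sym2.eq_swap])
          omega
      · have hdw : d ∈ w.support := by
          rcases hd with rfl | hd
          · exact absurd rfl hdx
          · exact hd
        have hew : e ∈ w.support := by
          rcases he with rfl | he
          · exact absurd rfl hex
          · exact he
        obtain ⟨q', hq1, hq2⟩ := ih hdw hew hne2
        refine ⟨Walk.cons h q', ?_, ?_⟩
        · intro z hz
          rw [Walk.support_cons, List.mem_cons] at hz ⊢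
          rcases hz with rfl | hz
          · exact Or.inl rfl
          · exact Or.inr (hq1 z hz)
        · rw [Walk.length_cons, Walk.length_cons, Nat.succ_lt_succ_iff]
          exact hq2

/-- A minimal-length walk whose support lies in `P`; it is a path. -/
lemma exists_min_path {x y : V} (P : Set V)
    (hne : ∃ p : G.Walk x y, ∀ z ∈ p.support, z ∈ P) :
    ∃ p : G.Walk x y, (∀ z ∈ p.support, z ∈ P) ∧ p.IsPath ∧
      ∀ q : G.Walk x y, (∀ z ∈ q.support, z ∈ P) → ¬ q.length < p.length := by
  classical
  obtain ⟨p0, hp0⟩ := hne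
  obtain ⟨n, hn, hnmin⟩ := Nat.lt_wfRel.wf.has_min
    {n | ∃ p : G.Walk x y, (∀ z ∈ p.support, z ∈ P) ∧ p.length = n} ⟨p0.length, p0, hp0, rfl⟩
  obtain ⟨p, hpP, hplen⟩ := hn
  have hmin : ∀ q : G.Walk x y, (∀ z ∈ q.support, z ∈ P) → ¬ q.length < p.length := by
    intro q hq hlt
    exact hnmin q.length ⟨q, hq, rfl⟩ (hplen ▸ hlt)
  have hbyP : ∀ z ∈ p.bypass.support, z ∈ P := fun z hz => hpP z (p.support_bypass_subset hz)
  have hle : p.length ≤ p.bypass.length := by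
    by_contra h
    push_neg at h
    exact hmin p.bypass hbyP h
  have hpeq := p.bypass_eq_self_of_length_le hle
  exact ⟨p, hpP, hpeq ▸ p.bypass_isPath, hmin⟩

/-- Key lemma: a minimal separator in a chordal graph is a clique. -/
lemma sep_clique (hch : IsChordalGraph G) {a b : V} {S : Set V} (hS : IsSep G a b S)
    (hmn : ∀ x ∈ S, ∃ w : G.Walk a b, ∀ z ∈ w.support, z ∈ S → z = x) :
    G.IsClique S := by
  classical
  intro x hx y hy hxy
  by_contra hnadj
  have hmnb : ∀ x ∈ S, ∃ w : G.Walk b a, ∀ z ∈ w.support, z ∈ S → z = x := by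
    intro t ht
    obtain ⟨w, hw⟩ := hmn t ht
    exact ⟨w.reverse, fun z hz => hw z (by rwa [Walk.support_reverse, List.mem_reverse] at hz)⟩
  obtain ⟨ux, hxux, hrux⟩ := sep_min_neighbor hS hx (hmn x hx)
  obtain ⟨uy, hyuy, hruy⟩ := sep_min_neighbor hS hy (hmn y hy)
  obtain ⟨vx, hxvx, hrvx⟩ := sep_min_neighbor hS.symm hx (hmnb x hx)
  obtain ⟨vy, hyvy, hrvy⟩ := sep_min_neighbor hS.symm hy (hmnb y hy)
  set PA : Set V := {z | z = x ∨ z = y ∨ Reach G S a z} with hPA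
  set PB : Set V := {z | z = x ∨ z = y ∨ Reach G S b z} with hPB
  have hAex : ∃ p : G.Walk x y, ∀ z ∈ p.support, z ∈ PA := by
    obtain ⟨w0, hw0⟩ := hrux.symm.trans hruy
    refine ⟨Walk.cons hxux (w0.concat hyuy.symm), fun z hz => ?_⟩
    rw [Walk.support_cons, List.mem_cons] at hz
    rcases hz with rfl | hz
    · exact Or.inl rfl
    · rw [Walk.support_concat] at hz
      simp only [List.concat_eq_append, List.mem_append, List.mem_singleton] at hz
      rcases hz with hz | rfl
      · exact Or.inr (Or.inr (hrux.trans (reach_of_mem_support hw0 hz)))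
      · exact Or.inr (Or.inl rfl)
  have hBex : ∃ p : G.Walk y x, ∀ z ∈ p.support, z ∈ PB := by
    obtain ⟨w0, hw0⟩ := hrvy.symm.trans hrvx
    refine ⟨Walk.cons hyvy (w0.concat hxvx.symm), fun z hz => ?_⟩
    rw [Walk.support_cons, List.mem_cons] at hz
    rcases hz with rfl | hz
    · exact Or.inr (Or.inl rfl)
    · rw [Walk.support_concat] at hz
      simp only [List.concat_eq_append, List.mem_append, List.mem_singleton] at hz
      rcases hz with hz | rfl
      · exact Or.inr (Or.inr (hrvy.trans (reach_of_mem_support hw0 hz)))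
      · exact Or.inl rfl
  obtain ⟨p, hpP, hppath, hpmin⟩ := exists_min_path PA hAex
  obtain ⟨q, hqP, hqpath, hqmin⟩ := exists_min_path PB hBex
  have hABconf : ∀ z, Reach G S a z → Reach G S b z → False := fun z h1 h2 =>
    not_reach_of_sep hS (h1.trans h2.symm)
  have hxA : ¬ Reach G S a x := fun h => h.not_mem hx
  have hyA : ¬ Reach G S a y := fun h => h.not_mem hy
  have hxB : ¬ Reach G S b x := fun h => h.not_mem hx
  have hyB : ¬ Reach G S b y := fun h => h.not_mem hy
  have hmeet : ∀ z, z ∈ p.support → z ∈ q.support → z = x ∨ z = y := by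
    intro z h1 h2
    rcases hpP z h1 with rfl | rfl | hz1
    · exact Or.inl rfl
    · exact Or.inr rfl
    · rcases hqP z h2 with rfl | rfl | hz2
      · exact Or.inl rfl
      · exact Or.inr rfl
      · exact absurd (hABconf z hz1 hz2) not_false
  have hplen2 : 2 ≤ p.length := by
    by_contra h
    push_neg at h
    interval_cases hp : p.length
    · exact hxy (Walk.eq_of_length_eq_zero hp)
    · exact hnadj (adj_of_length_one p hp)
  have hqlen2 : 2 ≤ q.length := by
    by_contra h
    push_neg at h
    interval_cases hq : q.length
    · exact hxy (Walk.eq_of_length_eq_zero hq).symm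
    · exact hnadj (adj_of_length_one q hq).symm
  set c : G.Walk x x := p.append q with hc
  have hclen : c.length = p.length + q.length := Walk.length_append _ _
  have hcyc : c.IsCycle := by
    rw [Walk.isCycle_def]
    refine ⟨?_, ?_, ?_⟩
    · rw [Walk.isTrail_def, Walk.edges_append]
      rw [List.nodup_append]
      refine ⟨hppath.isTrail.edges_nodup, hqpath.isTrail.edges_nodup, ?_⟩
      intro ε hε1 ε' hε2 hεε'
      subst hεε'
      induction ε using Sym2.ind with
      | _ s t =>
        have hs1 := p.fst_mem_support_of_mem_edges hε1
        have ht1 := p.snd_mem_support_of_mem_edges hε1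
        have hs2 := q.fst_mem_support_of_mem_edges hε2
        have ht2 := q.snd_mem_support_of_mem_edges hε2
        have hadj := p.adj_of_mem_edges hε1
        rcases hmeet s hs1 hs2 with rfl | rfl
        · rcases hmeet t ht1 ht2 with rfl | rfl
          · exact hadj.ne rfl
          · exact hnadj hadj
        · rcases hmeet t ht1 ht2 with rfl | rfl
          · exact hnadj hadj.symm
          · exact hadj.ne rfl
    · intro hnil
      have : c.length = 0 := by rw [hnil]; rfl
      omega
    · have hcs : c.support = p.support ++ q.support.tail := Walk.support_append _ _
      have htail : c.support.tail = p.support.tail ++ q.support.tail := by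
        rw [hcs, p.support_eq_cons]
        simp
      rw [htail, List.nodup_append]
      have hpn := hppath.support_nodup
      have hqn := hqpath.support_nodup
      have hpn' : (x :: p.support.tail).Nodup := p.support_eq_cons ▸ hpn
      have hqn' : (y :: q.support.tail).Nodup := q.support_eq_cons ▸ hqn
      refine ⟨(List.nodup_cons.mp hpn').2, (List.nodup_cons.mp hqn').2, ?_⟩
      intro z hz1 z' hz2 hzz'
      subst hzz'
      have hz1' : z ∈ p.support := p.support_eq_cons ▸ List.mem_cons_of_mem _ hz1
      have hz2' : z ∈ q.support := q.support_eq_cons ▸ List.mem_cons_of_mem _ hz2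
      rcases hmeet z hz1' hz2' with rfl | rfl
      · exact (List.nodup_cons.mp hpn').1 hz1
      · exact (List.nodup_cons.mp hqn').1 hz2
  have hlen4 : 4 ≤ c.length := by omega
  obtain ⟨d, e, hd, he, hde, hnotin⟩ := hch x c hcyc hlen4
  have hmemcase : ∀ z, z ∈ c.support → z ∈ p.support ∨ z ∈ q.support := by
    intro z hz
    rw [hc, Walk.mem_support_append_iff] at hz
    exact hz
  have hnpe : s(d, e) ∉ p.edges := fun h => hnotin (by
    rw [hc, Walk.edges_append]; exact List.mem_append_left _ h)
  have hnqe : s(d, e) ∉ q.edges := fun h => hnotin (by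
    rw [hc, Walk.edges_append]; exact List.mem_append_right _ h)
  rcases hmemcase d hd with hdp | hdq
  · by_cases hep : e ∈ p.support
    · obtain ⟨q0, hq0s, hq0l⟩ := shortcut p hde hdp hep hnpe
      exact hpmin q0 (fun z hz => hpP z (hq0s z hz)) hq0l
    · have heq : e ∈ q.support := (hmemcase e he).resolve_left hep
      by_cases hdq' : d ∈ q.support
      · obtain ⟨q0, hq0s, hq0l⟩ := shortcut q hde hdq' heq hnqe
        exact hqmin q0 (fun z hz => hqP z (hq0s z hz)) hq0l
      · -- d in A only, e in B only
        have hdA : Reach G S a d := by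
          rcases hpP d hdp with rfl | rfl | h
          · exact absurd q.end_mem_support hdq'
          · exact absurd q.start_mem_support hdq'
          · exact h
        have heB : Reach G S b e := by
          rcases hqP e heq with rfl | rfl | h
          · exact absurd p.start_mem_support hep
          · exact absurd p.end_mem_support hep
          · exact h
        exact hABconf e (hdA.adj hde heB.not_mem) heB
  · by_cases heq : e ∈ q.support
    · obtain ⟨q0, hq0s, hq0l⟩ := shortcut q hde hdq heq hnqe
      exact hqmin q0 (fun z hz => hqP z (hq0s z hz)) hq0l
    · have hep : e ∈ p.support := (hmemcase e he).resolve_right heq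
      by_cases hdp' : d ∈ p.support
      · obtain ⟨q0, hq0s, hq0l⟩ := shortcut p hde hdp' hep hnpe
        exact hpmin q0 (fun z hz => hpP z (hq0s z hz)) hq0l
      · have hdB : Reach G S b d := by
          rcases hqP d hdq with rfl | rfl | h
          · exact absurd p.start_mem_support hdp'
          · exact absurd p.end_mem_support hdp'
          · exact h
        have heA : Reach G S a e := by
          rcases hpP e hep with rfl | rfl | h
          · exact absurd q.end_mem_support heq
          · exact absurd q.start_mem_support heq
          · exact h
        exact hABconf d (heA.adj hde.symm hdB.not_mem) hdB

/-- Induced subgraphs of chordal graphs are chordal. -/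
lemma chordal_induce (hch : IsChordalGraph G) (s : Set V) :
    IsChordalGraph (G.induce s) := by
  intro v w hw hl
  let f : G.induce s ↪g G := SimpleGraph.Embedding.induce s
  have hc : (w.map f.toHom).IsCycle := hw.map f.injective
  have hl' : 4 ≤ (w.map f.toHom).length := by rwa [Walk.length_map]
  obtain ⟨d, e, hd, he, hde, hnotin⟩ := hch _ (w.map f.toHom) hc hl'
  rw [Walk.support_map] at hd he
  obtain ⟨d', hd', rfl⟩ := List.mem_map.mp hd
  obtain ⟨e', he', rfl⟩ := List.mem_map.mp he
  refine ⟨d', e', hd', he', f.map_adj_iff.mp hde, ?_⟩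
  intro hmem
  apply hnotin
  rw [Walk.edges_map]
  exact List.mem_map.mpr ⟨s(d', e'), hmem, Sym2.map_pair_eq _ _ _⟩

/-- Dirac's theorem: a chordal graph is complete or has two nonadjacent simplicial vertices. -/
theorem dirac (m : ℕ) : ∀ (V : Type) [Fintype V] (G : SimpleGraph V),
    Fintype.card V ≤ m → IsChordalGraph G →
    (∀ a b : V, a ≠ b → G.Adj a b) ∨
      ∃ u w : V, u ≠ w ∧ ¬ G.Adj u w ∧ G.IsClique (G.neighborSet u) ∧
        G.IsClique (G.neighborSet w) := by
  induction m with
  | zero =>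
    intro V _ G hcard _
    left
    intro a
    have : 0 < Fintype.card V := Fintype.card_pos_iff.mpr ⟨a⟩
    omega
  | succ m ih =>
    intro V _ G hcard hch
    by_cases hcomp : ∀ a b : V, a ≠ b → G.Adj a b
    · exact Or.inl hcomp
    right
    push_neg at hcomp
    obtain ⟨a, b, hab, hnadj⟩ := hcomp
    classical
    -- the separator family is nonempty
    have hsep0 : IsSep G a b ({a, b}ᶜ) := by
      refine ⟨by simp, by simp, fun w => ?_⟩
      by_contra hno
      push_neg at hno
      -- all vertices of w are in {a, b}
      have hsub : ∀ z ∈ w.support, z = a ∨ z = b := by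
        intro z hz
        have h' := hno z hz
        simp only [Set.mem_compl_iff, Set.mem_insert_iff, Set.mem_singleton_iff, not_not,
          not_or, not_not] at h'
        tauto
      -- contradiction: walk from a to b within {a,b} without edge ab
      obtain ⟨c, h, w', rfl⟩ := Walk.exists_eq_cons_of_ne hab w
      have hc : c = a ∨ c = b := hsub c (by
        rw [Walk.support_cons]; exact List.mem_cons_of_mem _ w'.start_mem_support)
      rcases hc with rfl | rfl
      · exact h.ne rfl
      · exact hnadj h
    obtain ⟨nc, hnc, hncmin⟩ := Nat.lt_wfRel.wf.has_min
      {k | ∃ S : Set V, IsSep G a b S ∧ S.ncard = k} ⟨_, _, hsep0, rfl⟩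
    obtain ⟨S, hS, hSnc⟩ := hnc
    have hmn : ∀ x ∈ S, ∃ w : G.Walk a b, ∀ z ∈ w.support, z ∈ S → z = x := by
      intro x hx
      have hlt : (S \ {x}).ncard < S.ncard :=
        Set.ncard_diff_singleton_lt_of_mem hx (Set.toFinite S)
      have hnotsep : ¬ IsSep G a b (S \ {x}) := by
        intro hsep'
        exact hncmin (S \ {x}).ncard ⟨_, hsep', rfl⟩ (hSnc ▸ hlt)
      have hblocks : ¬ ∀ w : G.Walk a b, ∃ z ∈ w.support, z ∈ S \ {x} := by
        intro hbl
        exact hnotsep ⟨fun h => hS.ha h.1, fun h => hS.hb h.1, hbl⟩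
      push_neg at hblocks
      obtain ⟨w, hw⟩ := hblocks
      refine ⟨w, fun z hz hzS => ?_⟩
      have := hw z hz
      rw [Set.mem_diff, Set.mem_singleton_iff] at this
      by_contra hne
      exact this ⟨hzS, hne⟩
    have hSclq : G.IsClique S := sep_clique hch hS hmn
    -- the side lemma
    have side : ∀ (c d : V), IsSep G c d S →
        ∃ v, Reach G S c v ∧ G.IsClique (G.neighborSet v) := by
      intro c d hScd
      set s₁ : Set V := {z | Reach G S c z} ∪ S with hs₁
      haveI : Fintype ↥s₁ := Fintype.ofFinite _
      have hd1 : d ∉ s₁ := by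
        rintro (hd | hd)
        · exact not_reach_of_sep hScd hd
        · exact hScd.hb hd
      have hcard1 : Fintype.card ↥s₁ ≤ m := by
        have hlt : Fintype.card ↥s₁ < Fintype.card V := by
          apply Fintype.card_lt_of_injective_of_notMem (Subtype.val) Subtype.val_injective
            (b := d)
          rw [Subtype.range_val]
          exact hd1
        omega
      have hlift : ∀ (v : ↥s₁), ↑v ∈ {z | Reach G S c z} →
          (G.induce s₁).IsClique ((G.induce s₁).neighborSet v) →
          G.IsClique (G.neighborSet (↑v : V)) := by
        intro v hv hvcl
        intro z1 h1 z2 h2 hne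
        have hz1 : z1 ∈ s₁ := by
          by_cases h : z1 ∈ S
          · exact Or.inr h
          · exact Or.inl (hv.adj h1 h)
        have hz2 : z2 ∈ s₁ := by
          by_cases h : z2 ∈ S
          · exact Or.inr h
          · exact Or.inl (hv.adj h2 h)
        have hm1 : (⟨z1, hz1⟩ : ↥s₁) ∈ (G.induce s₁).neighborSet v := h1
        have hm2 : (⟨z2, hz2⟩ : ↥s₁) ∈ (G.induce s₁).neighborSet v := h2
        have : (G.induce s₁).Adj ⟨z1, hz1⟩ ⟨z2, hz2⟩ :=
          hvcl hm1 hm2 (fun h => hne (congrArg Subtype.val h))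
        exact this
      rcases ih ↥s₁ (G.induce s₁) hcard1 (chordal_induce hch s₁) with hcomp1 | hpair
      · have hcA : c ∈ {z | Reach G S c z} := reach_refl hScd.ha
        refine ⟨c, hcA, hlift ⟨c, Or.inl hcA⟩ hcA ?_⟩
        intro n1 hn1 n2 hn2 hne
        exact hcomp1 n1 n2 hne
      · obtain ⟨u, w, huw, hnuw, hu, hw⟩ := hpair
        have hnot_both : ¬ ((↑u : V) ∈ S ∧ (↑w : V) ∈ S) := by
          rintro ⟨h1, h2⟩
          exact hnuw (hSclq h1 h2 (fun h => huw (Subtype.ext h)))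
        by_cases huA : (↑u : V) ∈ {z | Reach G S c z}
        · exact ⟨↑u, huA, hlift u huA hu⟩
        · have huS : (↑u : V) ∈ S := u.2.resolve_left huA
          have hwA : (↑w : V) ∈ {z | Reach G S c z} := by
            rcases w.2 with h | h
            · exact h
            · exact absurd ⟨huS, h⟩ hnot_both
          exact ⟨↑w, hwA, hlift w hwA hw⟩
    obtain ⟨vA, hvA, hvAcl⟩ := side a b hS
    obtain ⟨vB, hvB, hvBcl⟩ := side b a hS.symm
    have hABconf : ∀ z, Reach G S a z → Reach G S b z → False := fun z h1 h2 =>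
      not_reach_of_sep hS (h1.trans h2.symm)
    refine ⟨vA, vB, ?_, ?_, hvAcl, hvBcl⟩
    · intro h
      exact hABconf vA hvA (h ▸ hvB)
    · intro h
      exact hABconf vB (hvA.adj h hvB.not_mem) hvB

lemma exists_simplicial (V : Type) [Fintype V] [Nonempty V] (G : SimpleGraph V)
    (hch : IsChordalGraph G) : ∃ v, G.IsClique (G.neighborSet v) := by
  rcases dirac (Fintype.card V) V G le_rfl hch with hcomp | ⟨u, w, _, _, hu, _⟩
  · obtain ⟨v⟩ := ‹Nonempty V›
    exact ⟨v, fun z1 _ z2 _ hne => hcomp z1 z2 hne⟩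
  · exact ⟨u, hu⟩

end Aux

/-- every chordal graph with at least one edge contains an exposed edge. -/
theorem chordal_has_exposed_edge (n : ℕ) (G : SimpleGraph (Fin n))
    (hch : IsChordalGraph G) (hne : G.edgeSet.Nonempty) :
    ∃ e ∈ G.edgeSet, IsExposedEdge G e := by
  classical
  obtain ⟨e, he⟩ := hne
  revert he
  refine Sym2.ind (fun u v he => ?_) e
  have hadj : G.Adj u v := he
  set supp : Set (Fin n) := {x | ∃ y, G.Adj x y} with hsupp
  have hu : u ∈ supp := ⟨v, hadj⟩
  haveI : Fintype ↥supp := Fintype.ofFinite _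
  haveI : Nonempty ↥supp := ⟨⟨u, hu⟩⟩
  obtain ⟨v', hv'⟩ := exists_simplicial ↥supp (G.induce supp) (chordal_induce hch supp)
  obtain ⟨w, hw⟩ := v'.2
  have hsimp : G.IsClique (G.neighborSet (↑v' : Fin n)) := by
    intro z1 h1 z2 h2 hne2
    have hz1 : z1 ∈ supp := ⟨_, (h1 : G.Adj _ z1).symm⟩
    have hz2 : z2 ∈ supp := ⟨_, (h2 : G.Adj _ z2).symm⟩
    have hm1 : (⟨z1, hz1⟩ : ↥supp) ∈ (G.induce supp).neighborSet v' := h1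
    have hm2 : (⟨z2, hz2⟩ : ↥supp) ∈ (G.induce supp).neighborSet v' := h2
    have : (G.induce supp).Adj ⟨z1, hz1⟩ ⟨z2, hz2⟩ :=
      hv' hm1 hm2 (fun h => hne2 (congrArg Subtype.val h))
    exact this
  exact ⟨s(↑v', w), hw, exposed_of_simpl hw hsimp⟩
end

section
/- Let G be a chordal graph and let ∂G denote the edge-induced subgraph of G determined by the properly exposed edges of G. Then every connected component of ∂G is 2-edge-connected; equivalently, ∂G has no bridges: for every edge e of ∂G, the endpoints of e are joined by a path in ∂G that avoids e. -/
/-- The edge-induced subgraph `∂G` of `G` determined by the properly exposed edges. -/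
def exposedBoundary {V : Type} (G : SimpleGraph V) : SimpleGraph V :=
  SimpleGraph.fromEdgeSet {e | e ∈ G.edgeSet ∧ IsProperlyExposedEdge G e}

open SimpleGraph
set_option linter.unusedSectionVars false
set_option linter.unusedVariables false

namespace B17

variable {V : Type} [Fintype V] [DecidableEq V]

def Gr (G : SimpleGraph V) (B : Set V) : SimpleGraph V where
  Adj a b := G.Adj a b ∧ a ∈ B ∧ b ∈ B
  symm := ⟨fun a b h => ⟨h.1.symm, h.2.2, h.2.1⟩⟩
  loopless := ⟨fun a h => G.loopless.irrefl a h.1⟩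

lemma gr_adj {G : SimpleGraph V} {B : Set V} {a b : V} :
    (Gr G B).Adj a b ↔ G.Adj a b ∧ a ∈ B ∧ b ∈ B := Iff.rfl

lemma gr_le (G : SimpleGraph V) (B : Set V) : Gr G B ≤ G := fun _ _ h => h.1

lemma gr_support_mem {G : SimpleGraph V} {B : Set V} {u v : V}
    (w : (Gr G B).Walk u v) : ∀ z ∈ w.support, z = u ∨ z ∈ B := by
  induction w with
  | nil => intro z hz; left; simpa using hz
  | cons h p ih =>
    intro z hz
    rw [Walk.support_cons, List.mem_cons] at hz
    rcases hz with rfl | hz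
    · left; rfl
    · rcases ih z hz with rfl | hz'
      · right; exact h.2.2
      · right; exact hz'

/-- Invariant propagation along a walk. -/
lemma walk_forward {G : SimpleGraph V} {P : V → Prop}
    (hP : ∀ a b, G.Adj a b → P a → P b) :
    ∀ {u v : V}, G.Walk u v → P u → P v := by
  intro u v w
  induction w with
  | nil => exact id
  | cons h p ih => exact fun hu => ih (hP _ _ h hu)

lemma reachable_mono_adj {H K : SimpleGraph V}
    (h : ∀ a b, H.Adj a b → K.Reachable a b) {u v : V}
    (hr : H.Reachable u v) : K.Reachable u v := by
  obtain ⟨w⟩ := hr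
  induction w with
  | nil => exact Reachable.refl _
  | cons ha p ih => exact (h _ _ ha).trans ih

lemma edge_mem_of_length_one {G : SimpleGraph V} {a b : V} (w : G.Walk a b)
    (h : w.length = 1) : s(a, b) ∈ w.edges := by
  cases w with
  | nil => simp at h
  | @cons _ c _ hadj p =>
    have hp : p.length = 0 := by simpa using h
    have hc := Walk.eq_of_length_eq_zero hp
    subst hc
    simp

lemma exists_min_walk {G : SimpleGraph V} {u v : V} (h : G.Reachable u v) :
    ∃ w : G.Walk u v, w.IsPath ∧ ∀ w' : G.Walk u v, w.length ≤ w'.length := by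
  classical
  obtain ⟨w0⟩ := h
  have hP : ∃ n, ∃ w : G.Walk u v, w.length = n := ⟨w0.length, w0, rfl⟩
  obtain ⟨w1, hw1⟩ := Nat.find_spec hP
  refine ⟨w1.bypass, Walk.bypass_isPath w1, fun w' => ?_⟩
  calc w1.bypass.length ≤ w1.length := Walk.length_bypass_le w1
    _ ≤ w'.length := by rw [hw1]; exact Nat.find_min' hP ⟨w', rfl⟩

/-- A minimal-length walk admits no chords. -/
lemma shortcut {H : SimpleGraph V} {p q : V} (W : H.Walk p q)
    (hmin : ∀ W' : H.Walk p q, W.length ≤ W'.length)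
    {a b : V} (ha : a ∈ W.support) (hb : b ∈ W.support)
    (hadj : H.Adj a b) (hne : s(a, b) ∉ W.edges) : False := by
  obtain ⟨Q, R, rfl⟩ := Walk.mem_support_iff_exists_append.mp ha
  rw [Walk.mem_support_append_iff] at hb
  rcases hb with hb | hb
  · -- b occurs in Q : Walk p a ; split Q at b
    obtain ⟨Q₁, Q₂, rfl⟩ := Walk.mem_support_iff_exists_append.mp hb
    -- Q₂ : Walk b a, new walk Q₁.append (cons hadj.symm R)
    have h2 : 2 ≤ Q₂.length := by
      rcases Nat.lt_or_ge Q₂.length 2 with h' | h'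
      · interval_cases h'' : Q₂.length
        · exact absurd (Walk.eq_of_length_eq_zero h'') hadj.ne'
        · exact absurd (edge_mem_of_length_one Q₂ h'') (by
            rw [Sym2.eq_swap] at hne
            intro hmem
            exact hne (by simp [Walk.edges_append, hmem]))
      · exact h'
    have := hmin (Q₁.append (Walk.cons hadj.symm R))
    simp only [Walk.length_append, Walk.length_cons] at this
    omega
  · -- b occurs in R : Walk a q
    obtain ⟨R₁, R₂, rfl⟩ := Walk.mem_support_iff_exists_append.mp hb
    have h2 : 2 ≤ R₁.length := by
      rcases Nat.lt_or_ge R₁.length 2 with h' | h'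
      · interval_cases h'' : R₁.length
        · exact absurd (Walk.eq_of_length_eq_zero h'') hadj.ne
        · exact absurd (edge_mem_of_length_one R₁ h'') (by
            intro hmem
            exact hne (by simp [Walk.edges_append, hmem]))
      · exact h'
    have := hmin (Q.append (Walk.cons hadj R₂))
    simp only [Walk.length_append, Walk.length_cons] at this
    omega


lemma chordal_gr {G : SimpleGraph V} (hch : IsChordalGraph G) (B : Set V) :
    IsChordalGraph (Gr G B) := by
  intro v w hcyc hlen
  have hv : v ∈ B := by
    cases w with
    | nil => simp at hlen
    | cons h p => exact h.2.1
  have hsup : ∀ z ∈ w.support, z ∈ B := by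
    intro z hz
    rcases gr_support_mem w z hz with rfl | h
    · exact hv
    · exact h
  have hedges : ∀ e ∈ w.edges, e ∈ G.edgeSet :=
    fun e he => edgeSet_mono (gr_le G B) (Walk.edges_subset_edgeSet w he)
  obtain ⟨a, b, ha, hb, hab, hnab⟩ := hch v (w.transfer G hedges)
    (hcyc.transfer hedges) (by rwa [Walk.length_transfer])
  rw [Walk.support_transfer] at ha hb
  rw [Walk.edges_transfer] at hnab
  exact ⟨a, b, ha, hb, ⟨hab, hsup a ha, hsup b hb⟩, hnab⟩

lemma pair_subset_iff {S : Set V} {x y : V} :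
    (∀ z ∈ s(x, y), z ∈ S) ↔ x ∈ S ∧ y ∈ S := by
  constructor
  · intro h; exact ⟨h x (by simp), h y (by simp)⟩
  · rintro ⟨hx, hy⟩ z hz; rcases Sym2.mem_iff.mp hz with rfl | rfl <;> assumption

/-- `s` is a simplicial vertex. -/
def Simp (G : SimpleGraph V) (s : V) : Prop :=
  ∀ p q, G.Adj s p → G.Adj s q → p ≠ q → G.Adj p q

/-- Closed neighborhood. -/
def NN (G : SimpleGraph V) (s : V) : Set V := {t | t = s ∨ G.Adj s t}

lemma NN_clique {G : SimpleGraph V} {s : V} (hs : Simp G s) : G.IsClique (NN G s) := by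
  intro a ha b hb hab
  rcases ha with rfl | ha
  · rcases hb with rfl | hb
    · exact absurd rfl hab
    · exact hb
  · rcases hb with rfl | hb
    · exact ha.symm
    · exact hs a b ha hb hab

lemma clique_subset_NN {G : SimpleGraph V} {T : Set V} {s : V}
    (hT : G.IsClique T) (hsT : s ∈ T) : T ⊆ NN G s := by
  intro t ht
  by_cases hts : t = s
  · exact Or.inl hts
  · exact Or.inr (hT hsT ht (fun h => hts h.symm))

lemma NN_max {G : SimpleGraph V} {s : V} (hs : Simp G s) :
    IsMaxGraphClique G (NN G s) := by
  refine ⟨NN_clique hs, fun T hT hsub => ?_⟩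
  exact Set.Subset.antisymm hsub (clique_subset_NN hT (hsub (Or.inl rfl)))

lemma maxclique_eq_NN {G : SimpleGraph V} {T : Set V} {s : V}
    (hs : Simp G s) (hT : IsMaxGraphClique G T) (hsT : s ∈ T) : T = NN G s :=
  hT.2 (NN G s) (NN_clique hs) (clique_subset_NN hT.1 hsT)

lemma simp_edge_exposed {G : SimpleGraph V} {s x y : V} (hs : Simp G s)
    (hx : G.Adj s x) (hy : G.Adj s y) (hxy : x ≠ y) :
    IsProperlyExposedEdge G s(s, x) := by
  have hmem : ∀ T : Set V, (IsMaxGraphClique G T ∧ ∀ v ∈ s(s, x), v ∈ T) → T = NN G s := by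
    rintro T ⟨hT, hTm⟩
    exact maxclique_eq_NN hs hT (pair_subset_iff.mp hTm).1
  have hsize : 2 < (NN G s).ncard := by
    have h3 : ({s, x, y} : Set V).ncard = 3 := by
      rw [Set.ncard_eq_three]
      exact ⟨s, x, y, hx.ne, hy.ne, hxy, rfl⟩
    have hsub : ({s, x, y} : Set V) ⊆ NN G s := by
      intro z hz
      rcases hz with rfl | rfl | rfl
      · exact Or.inl rfl
      · exact Or.inr hx
      · exact Or.inr hy
    have := Set.ncard_le_ncard hsub (Set.toFinite _)
    omega
  refine ⟨⟨(mem_edgeSet _).mpr hx, ⟨NN G s, ⟨NN_max hs, pair_subset_iff.mpr ⟨Or.inl rfl, Or.inr hx⟩⟩,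
    fun T hT => hmem T hT⟩⟩, fun S hS hSm => ?_⟩
  rw [hmem S ⟨hS, hSm⟩]
  exact hsize

lemma maxclique_gr_of {G : SimpleGraph V} {K : Set V} {s : V}
    (hK : IsMaxGraphClique G K) (hs : s ∉ K) :
    IsMaxGraphClique (Gr G {t | t ≠ s}) K := by
  constructor
  · intro a ha b hb hab
    exact ⟨hK.1 ha hb hab, fun h => hs (h ▸ ha), fun h => hs (h ▸ hb)⟩
  · intro T hT hsub
    exact hK.2 T (hT.mono (gr_le _ _)) hsub

lemma lift_exposed {G : SimpleGraph V} {s x y : V} (hs : Simp G s)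
    (hpe : IsProperlyExposedEdge (Gr G {t | t ≠ s}) s(x, y))
    (hnb : ¬(G.Adj s x ∧ G.Adj s y)) : IsProperlyExposedEdge G s(x, y) := by
  set G' := Gr G {t | t ≠ s} with hG'
  have hadj' : G'.Adj x y := (mem_edgeSet _).mp hpe.1.1
  have hxs : x ≠ s := hadj'.2.1
  have hys : y ≠ s := hadj'.2.2
  have hadj : G.Adj x y := hadj'.1
  -- max cliques of G' containing x,y are max cliques of G containing x,y and conversely
  have h1 : ∀ T : Set V, IsMaxGraphClique G' T → x ∈ T → y ∈ T → IsMaxGraphClique G T := by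
    intro T hT hxT hyT
    refine ⟨hT.1.mono (gr_le _ _), fun T₁ hT₁ hsub => ?_⟩
    have hsT₁ : s ∉ T₁ := by
      intro hsT₁
      refine hnb ⟨?_, ?_⟩
      · exact (hT₁ hsT₁ (hsub hxT) (fun h => hxs h.symm))
      · exact (hT₁ hsT₁ (hsub hyT) (fun h => hys h.symm))
    refine hT.2 T₁ ?_ hsub
    intro a ha b hb hab
    exact ⟨hT₁ ha hb hab, fun h => hsT₁ (h ▸ ha), fun h => hsT₁ (h ▸ hb)⟩
  have h2 : ∀ T : Set V, IsMaxGraphClique G T → x ∈ T → y ∈ T → IsMaxGraphClique G' T := by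
    intro T hT hxT hyT
    have hsT : s ∉ T := by
      intro hsT
      exact hnb ⟨hT.1 hsT hxT (fun h => hxs h.symm), hT.1 hsT hyT (fun h => hys h.symm)⟩
    exact maxclique_gr_of hT hsT
  obtain ⟨⟨hE, S₀, hS₀, huniq⟩, hsize⟩ := hpe
  have hxS₀ : x ∈ S₀ := (pair_subset_iff.mp hS₀.2).1
  have hyS₀ : y ∈ S₀ := (pair_subset_iff.mp hS₀.2).2
  refine ⟨⟨(mem_edgeSet _).mpr hadj, S₀, ⟨h1 S₀ hS₀.1 hxS₀ hyS₀, hS₀.2⟩, ?_⟩, ?_⟩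
  · rintro T ⟨hT, hTm⟩
    have hxT := (pair_subset_iff.mp hTm).1
    have hyT := (pair_subset_iff.mp hTm).2
    exact huniq T ⟨h2 T hT hxT hyT, hTm⟩
  · intro S hS hSm
    have hxS := (pair_subset_iff.mp hSm).1
    have hyS := (pair_subset_iff.mp hSm).2
    exact hsize S (h2 S hS hxS hyS) hSm

lemma boundary_adj {G : SimpleGraph V} {a b : V} :
    (exposedBoundary G).Adj a b ↔ IsProperlyExposedEdge G s(a, b) ∧ a ≠ b := by
  rw [exposedBoundary, fromEdgeSet_adj]
  constructor
  · rintro ⟨⟨_, h⟩, hne⟩; exact ⟨h, hne⟩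
  · rintro ⟨h, hne⟩; exact ⟨⟨h.1.1, h⟩, hne⟩

/-- Connected component (as reachability set) of `x` in the restriction to `D`. -/
def Comp (G : SimpleGraph V) (D : Set V) (x : V) : Set V :=
  {z | (Gr G D).Reachable x z}

lemma comp_refl {G : SimpleGraph V} {D : Set V} {x : V} : x ∈ Comp G D x :=
  Reachable.refl x

lemma comp_subset {G : SimpleGraph V} {D : Set V} {x : V} (hx : x ∈ D) :
    Comp G D x ⊆ D := by
  intro z hz
  obtain ⟨w⟩ := hz
  exact walk_forward (G := Gr G D) (fun a b hab _ => (gr_adj.mp hab).2.2) w hx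

lemma comp_adj {G : SimpleGraph V} {D : Set V} {x z w : V}
    (hz : z ∈ Comp G D x) (h : (Gr G D).Adj z w) : w ∈ Comp G D x :=
  Reachable.trans hz h.reachable

lemma walk_supp_comp {G : SimpleGraph V} {D : Set V} {x a b : V}
    (ha : a ∈ Comp G D x) (w : (Gr G D).Walk a b) :
    ∀ z ∈ w.support, z ∈ Comp G D x := by
  intro z hz
  obtain ⟨q, r, rfl⟩ := Walk.mem_support_iff_exists_append.mp hz
  exact Reachable.trans ha ⟨q⟩

lemma walk_transfer_gr {G : SimpleGraph V} {D E : Set V} {u v : V}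
    (w : (Gr G D).Walk u v) (hsup : ∀ z ∈ w.support, z ∈ E) :
    ∀ e ∈ w.edges, e ∈ (Gr G E).edgeSet := by
  intro e he
  induction e using Sym2.ind with
  | _ c d =>
    rw [mem_edgeSet]
    exact ⟨(Walk.adj_of_mem_edges w he).1, hsup c (w.fst_mem_support_of_mem_edges he),
      hsup d (w.snd_mem_support_of_mem_edges he)⟩

section Separator

variable {G : SimpleGraph V} {B : Set V} {S : Finset V} {x y : V}

lemma sep_nbr (hxB : x ∈ B) (hxy : x ≠ y)
    (hSsub : ↑S ⊆ B \ {x, y})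
    (hsep : ¬(Gr G (B \ ↑S)).Reachable x y)
    (hmin : ∀ S' : Finset V, ↑S' ⊆ B \ {x, y} →
      ¬(Gr G (B \ ↑S')).Reachable x y → S.card ≤ S'.card)
    {z : V} (hz : z ∈ S) : ∃ w ∈ Comp G (B \ ↑S) x, G.Adj z w := by
  by_contra hno
  push_neg at hno
  have hS'sub : ↑(S.erase z) ⊆ B \ {x, y} :=
    Set.Subset.trans (Finset.coe_subset.mpr (Finset.erase_subset _ _)) hSsub
  have hsep' : ¬(Gr G (B \ ↑(S.erase z))).Reachable x y := by
    intro hr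
    obtain ⟨w⟩ := hr
    have hstep : ∀ a b, (Gr G (B \ ↑(S.erase z))).Adj a b →
        a ∈ Comp G (B \ ↑S) x → b ∈ Comp G (B \ ↑S) x := by
      intro a b hab ha
      obtain ⟨hGab, haD, hbD⟩ := gr_adj.mp hab
      obtain ⟨hbB, hbn⟩ := hbD
      by_cases hbS : b ∈ S
      · exfalso
        have hbz : b = z := by
          by_contra hne
          refine hbn ?_
          simp only [Finset.coe_erase, Set.mem_diff, Set.mem_singleton_iff]
          exact ⟨hbS, hne⟩
        subst hbz
        exact hno a ha hGab.symm
      · have hxD : x ∈ B \ ↑S := (Set.mem_diff _).mpr ⟨hxB, fun h => (hSsub h).2 (by simp)⟩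
        have hbD' : b ∈ B \ ↑S := (Set.mem_diff _).mpr ⟨hbB, hbS⟩
        exact comp_adj ha (gr_adj.mpr ⟨hGab, comp_subset hxD ha, hbD'⟩)
    exact hsep (walk_forward hstep w comp_refl)
  have h1 := hmin (S.erase z) hS'sub hsep'
  have h2 : (S.erase z).card < S.card := Finset.card_erase_lt_of_mem hz
  omega

lemma side_walk (hxB : x ∈ B) (hxy : x ≠ y)
    (hSsub : ↑S ⊆ B \ {x, y})
    (hsep : ¬(Gr G (B \ ↑S)).Reachable x y)
    (hmin : ∀ S' : Finset V, ↑S' ⊆ B \ {x, y} →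
      ¬(Gr G (B \ ↑S')).Reachable x y → S.card ≤ S'.card)
    {p q : V} (hp : p ∈ S) (hq : q ∈ S) (hpq : p ≠ q) (hnpq : ¬G.Adj p q) :
    ∃ W : (Gr G (Comp G (B \ ↑S) x ∪ {p, q})).Walk p q,
      W.IsPath ∧ (∀ W' : (Gr G (Comp G (B \ ↑S) x ∪ {p, q})).Walk p q,
        W.length ≤ W'.length) ∧ 2 ≤ W.length := by
  set Ax := Comp G (B \ ↑S) x with hAx
  set Bx : Set V := Ax ∪ {p, q} with hBx
  obtain ⟨a, haAx, hpa⟩ := sep_nbr hxB hxy hSsub hsep hmin hp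
  obtain ⟨b, hbAx, hqb⟩ := sep_nbr hxB hxy hSsub hsep hmin hq
  have hreach : (Gr G Bx).Reachable p q := by
    have hr1 : (Gr G (B \ ↑S)).Reachable a b := haAx.symm.trans hbAx
    obtain ⟨w⟩ := hr1
    have hsup : ∀ z ∈ w.support, z ∈ Bx :=
      fun z hz => Or.inl (walk_supp_comp haAx w z hz)
    have hpq' : (Gr G Bx).Adj p a :=
      gr_adj.mpr ⟨hpa, Or.inr (by simp), Or.inl haAx⟩
    have hqb' : (Gr G Bx).Adj q b :=
      gr_adj.mpr ⟨hqb, Or.inr (by simp), Or.inl hbAx⟩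
    have hrab : (Gr G Bx).Reachable a b := ⟨w.transfer _ (walk_transfer_gr w hsup)⟩
    exact (hpq'.reachable).trans (hrab.trans hqb'.reachable.symm)
  obtain ⟨W, hWpath, hWmin⟩ := exists_min_walk hreach
  refine ⟨W, hWpath, hWmin, ?_⟩
  rcases Nat.lt_or_ge W.length 2 with h' | h'
  · interval_cases h'' : W.length
    · exact absurd (Walk.eq_of_length_eq_zero h'') hpq
    · exact absurd (Walk.adj_of_mem_edges W (edge_mem_of_length_one W h'')).1 hnpq
  · exact h'

end Separator

lemma path_loop_length {G : SimpleGraph V} {v v' : V} (t : G.Walk v v') (hv : v = v')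
    (ht : t.IsPath) : t.length = 0 := by
  subst hv
  cases t with
  | nil => rfl
  | cons h t' =>
    rw [Walk.cons_isPath_iff] at ht
    exact absurd t'.end_mem_support ht.2

lemma two_path_cycle {G : SimpleGraph V} {p q : V} (hpq : p ≠ q)
    (P Q : G.Walk p q) (hP : P.IsPath) (hQ : Q.IsPath)
    (h2P : 2 ≤ P.length) (h2Q : 2 ≤ Q.length)
    (hdisj : ∀ z, z ∈ P.support → z ∈ Q.support → z = p ∨ z = q) :
    ∃ C : G.Walk p p, C.IsCycle ∧ C.length = P.length + Q.length ∧
      (∀ z ∈ C.support, z ∈ P.support ∨ z ∈ Q.support) ∧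
      (∀ e ∈ P.edges, e ∈ C.edges) ∧ (∀ e ∈ Q.edges, e ∈ C.edges) := by
  cases P with
  | nil => simp at h2P
  | @cons _ c _ h t =>
    rw [Walk.cons_isPath_iff] at hP
    obtain ⟨ht, hpt⟩ := hP
    have hQrevP : Q.reverse.IsPath := hQ.reverse
    have hQrevNd : Q.reverse.support.Nodup := hQrevP.2
    have hsupQrev : Q.reverse.support = q :: Q.reverse.support.tail :=
      Walk.support_eq_cons _
    have hqtail : q ∉ Q.reverse.support.tail := by
      have := hQrevNd
      rw [hsupQrev, List.nodup_cons] at this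
      exact this.1
    have htailNd : Q.reverse.support.tail.Nodup := by
      have := hQrevNd
      rw [hsupQrev, List.nodup_cons] at this
      exact this.2
    have htailsub : ∀ z ∈ Q.reverse.support.tail, z ∈ Q.support := by
      intro z hz
      have hz2 : z ∈ Q.reverse.support := by
        rw [hsupQrev]; exact List.mem_cons_of_mem _ hz
      rwa [Walk.support_reverse, List.mem_reverse] at hz2
    have hct : c ∈ t.support := t.start_mem_support
    have hcP : c ∈ (Walk.cons h t).support := by
      rw [Walk.support_cons]; exact List.mem_cons_of_mem _ hct
    refine ⟨Walk.cons h (t.append Q.reverse), ?_, ?_, ?_, ?_, ?_⟩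
    · rw [Walk.cons_isCycle_iff]
      constructor
      · rw [Walk.isPath_def, Walk.support_append]
        rw [List.nodup_append]
        refine ⟨ht.2, htailNd, ?_⟩
        intro z hz1 z' hz2 hzz
        subst hzz
        have hzQ : z ∈ Q.support := htailsub z hz2
        have hzP : z ∈ (Walk.cons h t).support := by
          rw [Walk.support_cons]; exact List.mem_cons_of_mem _ hz1
        rcases hdisj z hzP hzQ with rfl | rfl
        · exact hpt hz1
        · exact hqtail hz2
      · rw [Walk.edges_append, List.mem_append]
        rintro (h1 | h2)
        · exact hpt (Walk.fst_mem_support_of_mem_edges t h1)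
        · rw [Walk.edges_reverse, List.mem_reverse] at h2
          have hcQ : c ∈ Q.support := Walk.snd_mem_support_of_mem_edges Q h2
          rcases hdisj c hcP hcQ with rfl | rfl
          · exact hpt hct
          · -- c = q : s(p,q) ∈ Q.edges, impossible for a path of length ≥ 2
            cases Q with
            | nil => simp at h2Q
            | @cons _ d _ hQ1 tQ =>
              rw [Walk.cons_isPath_iff] at hQ
              rw [Walk.edges_cons, List.mem_cons] at h2
              rcases h2 with h2 | h2
              · rw [Sym2.eq_iff] at h2
                rcases h2 with ⟨-, hdq⟩ | ⟨hpd, hqp⟩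
                · have : tQ.length = 0 := path_loop_length tQ hdq.symm hQ.1
                  simp [Walk.length_cons, this] at h2Q
                · exact hpq hqp.symm
              · exact hQ.2 (Walk.fst_mem_support_of_mem_edges tQ h2)
    · simp only [Walk.length_cons, Walk.length_append, Walk.length_reverse]
      omega
    · intro z hz
      rw [Walk.support_cons, List.mem_cons] at hz
      rcases hz with rfl | hz
      · exact Or.inl (Walk.start_mem_support _)
      · rw [Walk.mem_support_append_iff] at hz
        rcases hz with hz | hz
        · refine Or.inl ?_
          rw [Walk.support_cons]; exact List.mem_cons_of_mem _ hz
        · rw [Walk.support_reverse, List.mem_reverse] at hz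
          exact Or.inr hz
    · intro e he
      rw [Walk.edges_cons, List.mem_cons] at he ⊢
      rcases he with rfl | he
      · exact Or.inl rfl
      · rw [Walk.edges_append, List.mem_append]
        right; left; exact he
    · intro e he
      rw [Walk.edges_cons, List.mem_cons]
      right
      rw [Walk.edges_append, List.mem_append]
      right
      rw [Walk.edges_reverse, List.mem_reverse]
      exact he

section SepClique

variable {G : SimpleGraph V} {B : Set V} {S : Finset V} {x y : V}

lemma sep_clique (hch : IsChordalGraph G)
    (hxB : x ∈ B) (hyB : y ∈ B) (hxy : x ≠ y)
    (hSsub : ↑S ⊆ B \ {x, y})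
    (hsep : ¬(Gr G (B \ ↑S)).Reachable x y)
    (hmin : ∀ S' : Finset V, ↑S' ⊆ B \ {x, y} →
      ¬(Gr G (B \ ↑S')).Reachable x y → S.card ≤ S'.card)
    {p q : V} (hp : p ∈ S) (hq : q ∈ S) (hpq : p ≠ q) : G.Adj p q := by
  by_contra hnpq
  have hSsub' : ↑S ⊆ B \ {y, x} := by rwa [Set.pair_comm y x]
  have hsep' : ¬(Gr G (B \ ↑S)).Reachable y x := fun h => hsep h.symm
  have hmin' : ∀ S' : Finset V, ↑S' ⊆ B \ {y, x} →
      ¬(Gr G (B \ ↑S')).Reachable y x → S.card ≤ S'.card := by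
    intro S' h1 h2
    exact hmin S' (by rwa [Set.pair_comm y x] at h1) (fun h => h2 h.symm)
  set Ax := Comp G (B \ ↑S) x with hAxdef
  set Ay := Comp G (B \ ↑S) y with hAydef
  obtain ⟨Wx, hWxP, hWxMin, hWxLen⟩ := side_walk hxB hxy hSsub hsep hmin hp hq hpq hnpq
  obtain ⟨Wy, hWyP, hWyMin, hWyLen⟩ :=
    side_walk hyB hxy.symm hSsub' hsep' hmin' hp hq hpq hnpq
  have hxD : x ∈ B \ ↑S := (Set.mem_diff _).mpr ⟨hxB, fun h => (hSsub h).2 (by simp)⟩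
  have hyD : y ∈ B \ ↑S := (Set.mem_diff _).mpr ⟨hyB, fun h => (hSsub h).2 (by simp)⟩
  have hdisj : ∀ z, z ∈ Ax → z ∈ Ay → False := fun z h1 h2 => hsep (h1.trans h2.symm)
  have hWxSup : ∀ z ∈ Wx.support, z ∈ Ax ∪ {p, q} := by
    intro z hz
    rcases gr_support_mem Wx z hz with rfl | hmem
    · exact Or.inr (by simp)
    · exact hmem
  have hWySup : ∀ z ∈ Wy.support, z ∈ Ay ∪ {p, q} := by
    intro z hz
    rcases gr_support_mem Wy z hz with rfl | hmem
    · exact Or.inr (by simp)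
    · exact hmem
  have hEx : ∀ e ∈ Wx.edges, e ∈ G.edgeSet :=
    fun e he => edgeSet_mono (gr_le _ _) (Walk.edges_subset_edgeSet Wx he)
  have hEy : ∀ e ∈ Wy.edges, e ∈ G.edgeSet :=
    fun e he => edgeSet_mono (gr_le _ _) (Walk.edges_subset_edgeSet Wy he)
  have hdisjPQ : ∀ z, z ∈ (Wx.transfer G hEx).support → z ∈ (Wy.transfer G hEy).support →
      z = p ∨ z = q := by
    intro z hz1 hz2
    rw [Walk.support_transfer] at hz1 hz2
    rcases hWxSup z hz1 with hz1' | hz1'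
    · rcases hWySup z hz2 with hz2' | hz2'
      · exact absurd hz2' (fun h => hdisj z hz1' h)
      · simpa using hz2'
    · simpa using hz1'
  obtain ⟨C, hCcyc, hClen, hCsup, hCPe, hCQe⟩ := two_path_cycle hpq
    (Wx.transfer G hEx) (Wy.transfer G hEy) (hWxP.transfer hEx) (hWyP.transfer hEy)
    (by rwa [Walk.length_transfer]) (by rwa [Walk.length_transfer]) hdisjPQ
  obtain ⟨a, b, ha, hb, hab, hne⟩ := hch p C hCcyc (by
    rw [hClen, Walk.length_transfer, Walk.length_transfer]; omega)
  have hmemC : ∀ z ∈ C.support, z ∈ Wx.support ∨ z ∈ Wy.support := by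
    intro z hz
    rcases hCsup z hz with h1 | h1
    · rw [Walk.support_transfer] at h1; exact Or.inl h1
    · rw [Walk.support_transfer] at h1; exact Or.inr h1
  have hnex : s(a, b) ∉ Wx.edges := by
    intro hmem
    exact hne (hCPe _ (by rwa [Walk.edges_transfer]))
  have hney : s(a, b) ∉ Wy.edges := by
    intro hmem
    exact hne (hCQe _ (by rwa [Walk.edges_transfer]))
  have hshortx : a ∈ Wx.support → b ∈ Wx.support → False := by
    intro ha' hb'
    exact shortcut Wx hWxMin ha' hb'
      (gr_adj.mpr ⟨hab, hWxSup a ha', hWxSup b hb'⟩) hnex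
  have hshorty : a ∈ Wy.support → b ∈ Wy.support → False := by
    intro ha' hb'
    exact shortcut Wy hWyMin ha' hb'
      (gr_adj.mpr ⟨hab, hWySup a ha', hWySup b hb'⟩) hney
  have hPQends : p ∈ Wx.support ∧ q ∈ Wx.support ∧ p ∈ Wy.support ∧ q ∈ Wy.support :=
    ⟨Wx.start_mem_support, Wx.end_mem_support, Wy.start_mem_support, Wy.end_mem_support⟩
  have hAmem : ∀ z, z ∈ Wx.support → z ∉ Wy.support → z ∈ Ax := by
    intro z hz1 hz2
    rcases hWxSup z hz1 with h1 | h1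
    · exact h1
    · exfalso
      rcases (by simpa using h1 : z = p ∨ z = q) with rfl | rfl
      · exact hz2 hPQends.2.2.1
      · exact hz2 hPQends.2.2.2
  have hAmem' : ∀ z, z ∈ Wy.support → z ∉ Wx.support → z ∈ Ay := by
    intro z hz1 hz2
    rcases hWySup z hz1 with h1 | h1
    · exact h1
    · exfalso
      rcases (by simpa using h1 : z = p ∨ z = q) with rfl | rfl
      · exact hz2 hPQends.1
      · exact hz2 hPQends.2.1
  by_cases hax : a ∈ Wx.support
  · by_cases hbx : b ∈ Wx.support
    · exact hshortx hax hbx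
    · have hby : b ∈ Wy.support := (hmemC b hb).resolve_left hbx
      by_cases hay : a ∈ Wy.support
      · exact hshorty hay hby
      · have haAx : a ∈ Ax := hAmem a hax hay
        have hbAy : b ∈ Ay := hAmem' b hby hbx
        have : b ∈ Ax := comp_adj haAx (gr_adj.mpr ⟨hab,
          comp_subset hxD haAx, comp_subset hyD hbAy⟩)
        exact hdisj b this hbAy
  · have hay : a ∈ Wy.support := (hmemC a ha).resolve_left hax
    by_cases hby : b ∈ Wy.support
    · exact hshorty hay hby
    · have hbx : b ∈ Wx.support := (hmemC b hb).resolve_right hby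
      have haAy : a ∈ Ay := hAmem' a hay hax
      have hbAx : b ∈ Ax := hAmem b hbx hby
      have : a ∈ Ax := comp_adj hbAx (gr_adj.mpr ⟨hab.symm,
        comp_subset hxD hbAx, comp_subset hyD haAy⟩)
      exact hdisj a this haAy

end SepClique

/-- Relative simplicial vertex: its neighbours within `B` are pairwise adjacent. -/
def relSimp (G : SimpleGraph V) (B : Set V) (s : V) : Prop :=
  ∀ p q, p ∈ B → q ∈ B → G.Adj s p → G.Adj s q → p ≠ q → G.Adj p q

lemma dirac {G : SimpleGraph V} (hch : IsChordalGraph G) :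
    ∀ (k : ℕ) (B : Set V), B.ncard < k → ∀ x y, x ∈ B → y ∈ B → x ≠ y → ¬G.Adj x y →
      ∃ s ∈ B, relSimp G B s ∧ s ≠ y ∧ ¬G.Adj s y := by
  intro k
  induction k with
  | zero => intro B hB; exact absurd hB (Nat.not_lt_zero _)
  | succ k ih =>
    intro B hB x y hxB hyB hxy hnadj
    classical
    have hP0 : (↑(B \ {x, y}).toFinite.toFinset : Set V) ⊆ B \ {x, y} ∧
        ¬(Gr G (B \ ↑(B \ {x, y}).toFinite.toFinset)).Reachable x y := by
      rw [Set.Finite.coe_toFinset]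
      refine ⟨Set.Subset.rfl, ?_⟩
      intro hr
      obtain ⟨w⟩ := hr
      cases w with
      | nil => exact hxy rfl
      | @cons _ z _ h pw =>
        obtain ⟨hGxz, -, hz⟩ := gr_adj.mp h
        obtain ⟨hzB, hzn⟩ := hz
        have hzxy : z ∈ ({x, y} : Set V) := by
          by_contra hc
          exact hzn ⟨hzB, hc⟩
        rcases hzxy with rfl | rfl
        · exact hGxz.ne rfl
        · exact hnadj hGxz
    obtain ⟨S, hSmem, hSmin0⟩ := Finset.exists_min_image
      (Finset.univ.filter (fun S : Finset V =>
        ↑S ⊆ B \ {x, y} ∧ ¬(Gr G (B \ ↑S)).Reachable x y)) Finset.card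
      ⟨_, Finset.mem_filter.mpr ⟨Finset.mem_univ _, hP0⟩⟩
    rw [Finset.mem_filter] at hSmem
    obtain ⟨-, hSsub, hsep⟩ := hSmem
    have hmin : ∀ S' : Finset V, ↑S' ⊆ B \ {x, y} →
        ¬(Gr G (B \ ↑S')).Reachable x y → S.card ≤ S'.card := by
      intro S' h1 h2
      exact hSmin0 S' (Finset.mem_filter.mpr ⟨Finset.mem_univ _, h1, h2⟩)
    set Ax := Comp G (B \ ↑S) x with hAxdef
    have hxD : x ∈ B \ ↑S := (Set.mem_diff _).mpr ⟨hxB, fun h => (hSsub h).2 (by simp)⟩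
    have hyAx : y ∉ Ax := fun h => hsep h
    set B' : Set V := Ax ∪ ↑S with hB'def
    have hB'B : B' ⊆ B := by
      intro z hz
      rcases hz with hz | hz
      · exact (comp_subset hxD hz).1
      · exact (hSsub hz).1
    have hyB' : y ∉ B' := by
      rintro (h | h)
      · exact hyAx h
      · exact (hSsub h).2 (by simp)
    have hcard : B'.ncard < k := by
      have hss : B' ⊂ B := ⟨hB'B, fun hsub => hyB' (hsub hyB)⟩
      have := Set.ncard_lt_ncard hss (Set.toFinite B)
      omega
    have hnbr' : ∀ s, s ∈ Ax → ∀ z, z ∈ B → G.Adj s z → z ∈ B' := by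
      intro s hs z hzB hadj
      by_cases hzS : z ∈ ↑S
      · exact Or.inr hzS
      · exact Or.inl (comp_adj hs (gr_adj.mpr ⟨hadj, comp_subset hxD hs,
          (Set.mem_diff _).mpr ⟨hzB, hzS⟩⟩))
    have hxAx : x ∈ Ax := comp_refl
    have finish : ∀ s₂, s₂ ∈ Ax → relSimp G B' s₂ →
        ∃ s ∈ B, relSimp G B s ∧ s ≠ y ∧ ¬G.Adj s y := by
      intro s₂ hs₂ hr
      refine ⟨s₂, hB'B (Or.inl hs₂), ?_, ?_, ?_⟩
      · intro p q hpB hqB h1 h2 hne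
        exact hr p q (hnbr' s₂ hs₂ p hpB h1) (hnbr' s₂ hs₂ q hqB h2) h1 h2 hne
      · rintro rfl; exact hyAx hs₂
      · intro h
        exact hyB' (hnbr' s₂ hs₂ y hyB h)
    by_cases hcomp : ∀ a b, a ∈ B' → b ∈ B' → a ≠ b → G.Adj a b
    · refine ⟨x, hxB, ?_, hxy, hnadj⟩
      intro p q hpB hqB h1 h2 hne
      exact hcomp p q (hnbr' x hxAx p hpB h1) (hnbr' x hxAx q hqB h2) hne
    · push_neg at hcomp
      obtain ⟨p₁, q₁, hp₁, hq₁, hne₁, hnadj₁⟩ := hcomp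
      obtain ⟨s₁, hs₁B', hrs₁, hs₁q, hs₁nq⟩ := ih B' hcard p₁ q₁ hp₁ hq₁ hne₁ hnadj₁
      by_cases hs₁S : s₁ ∈ ↑S
      · have hx₁ : ∃ x₁, x₁ ∈ B' ∧ x₁ ≠ s₁ ∧ ¬G.Adj x₁ s₁ := by
          by_cases hall : ∀ z, z ∈ B' → z ≠ s₁ → G.Adj s₁ z
          · by_cases hps : p₁ = s₁
            · exact ⟨q₁, hq₁, fun h => hs₁q h.symm, fun h => hnadj₁ (hps.symm ▸ h.symm)⟩
            · exfalso
              exact hnadj₁ (hrs₁ p₁ q₁ hp₁ hq₁ (hall p₁ hp₁ hps)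
                (hall q₁ hq₁ (fun h => hs₁q h.symm)) hne₁)
          · push_neg at hall
            obtain ⟨z, hz1, hz2, hz3⟩ := hall
            exact ⟨z, hz1, hz2, fun h => hz3 h.symm⟩
        obtain ⟨x₁, hx₁B', hx₁ne, hx₁nadj⟩ := hx₁
        obtain ⟨s₂, hs₂B', hrs₂, hs₂ne, hs₂nadj⟩ :=
          ih B' hcard x₁ s₁ hx₁B' (Or.inr hs₁S) hx₁ne hx₁nadj
        have hs₂Ax : s₂ ∈ Ax := by
          rcases hs₂B' with h | h
          · exact h
          · exact absurd (sep_clique hch hxB hyB hxy hSsub hsep hmin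
              (Finset.mem_coe.mp h) (Finset.mem_coe.mp hs₁S) hs₂ne) hs₂nadj
        exact finish s₂ hs₂Ax hrs₂
      · exact finish s₁ (hs₁B'.resolve_right hs₁S) hrs₁

lemma bd_adj {G : SimpleGraph V} {a b : V} (h : IsProperlyExposedEdge G s(a, b))
    (hne : a ≠ b) : (exposedBoundary G).Adj a b := boundary_adj.mpr ⟨h, hne⟩

lemma pair_ne_of {a c u v : V} (hc : c ≠ u) (hc' : c ≠ v) : s(a, c) ≠ s(u, v) := by
  intro h
  rw [Sym2.eq_iff] at h
  rcases h with ⟨-, h⟩ | ⟨-, h⟩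
  · exact hc' h
  · exact hc h

lemma pair_ne_of' {s u v : V} (h1 : s ≠ u) (h2 : s ≠ v) : s(s, v) ≠ s(u, v) := by
  intro h
  rw [Sym2.eq_iff] at h
  rcases h with ⟨h, -⟩ | ⟨h, -⟩
  · exact h1 h
  · exact h2 h

lemma main_claim :
    ∀ (m : ℕ) (G : SimpleGraph V), G.edgeSet.ncard < m → IsChordalGraph G →
      ∀ (K : Set V) (u v : V), IsMaxGraphClique G K → 2 < K.ncard → u ∈ K → v ∈ K → u ≠ v →
        ((exposedBoundary G).deleteEdges {s(u, v)}).Reachable u v := by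
  intro m
  induction m with
  | zero => intro G h; exact absurd h (Nat.not_lt_zero _)
  | succ m ih =>
    intro G hGm hch K u v hK hKcard huK hvK huv
    classical
    have hadjuv : G.Adj u v := hK.1 huK hvK huv
    set A : Set V := {z | ∃ w, G.Adj z w} with hAdef
    have twostep : ∀ s : V, Simp G s → s ≠ u → s ≠ v → G.Adj s u → G.Adj s v →
        ((exposedBoundary G).deleteEdges {s(u, v)}).Reachable u v := by
      intro s hs hsu hsv h1 h2
      have e1 : IsProperlyExposedEdge G s(s, u) := simp_edge_exposed hs h1 h2 huv
      have e2 : IsProperlyExposedEdge G s(s, v) := simp_edge_exposed hs h2 h1 huv.symm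
      have a1 : ((exposedBoundary G).deleteEdges {s(u, v)}).Adj u s := by
        rw [SimpleGraph.deleteEdges_adj]
        refine ⟨bd_adj (by rw [Sym2.eq_swap]; exact e1) (fun h => hsu h.symm), ?_⟩
        simp only [Set.mem_singleton_iff]
        exact pair_ne_of hsu hsv
      have a2 : ((exposedBoundary G).deleteEdges {s(u, v)}).Adj s v := by
        rw [SimpleGraph.deleteEdges_adj]
        refine ⟨bd_adj e2 hsv, ?_⟩
        simp only [Set.mem_singleton_iff]
        exact pair_ne_of' hsu hsv
      exact a1.reachable.trans a2.reachable
    have hw : ∃ w, w ∈ K ∧ w ≠ u ∧ w ≠ v := by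
      by_contra hc
      push_neg at hc
      have hsub : K ⊆ {u, v} := by
        intro z hz
        by_cases h1 : z = u
        · exact Or.inl h1
        · exact Or.inr (hc z hz h1)
      have hle := Set.ncard_le_ncard hsub (Set.toFinite _)
      have h2 : ({u, v} : Set V).ncard ≤ 2 := by
        refine le_trans (Set.ncard_insert_le _ _) ?_
        simp [Set.ncard_singleton]
      omega
    by_cases hAcl : ∀ a b, a ∈ A → b ∈ A → a ≠ b → G.Adj a b
    · -- the set of non-isolated vertices is a clique
      have hKA : K ⊆ A := by
        intro z hz
        by_cases h1 : z = u
        · subst h1; exact ⟨v, hadjuv⟩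
        · exact ⟨u, hK.1 hz huK h1⟩
      have hAcliq : G.IsClique A := fun a ha b hb hne => hAcl a b ha hb hne
      have huA : u ∈ A := ⟨v, hadjuv⟩
      have hAmax : IsMaxGraphClique G A := by
        refine ⟨hAcliq, fun T hT hsub => Set.Subset.antisymm hsub ?_⟩
        intro t ht
        by_cases htu : t = u
        · subst htu; exact huA
        · exact ⟨u, hT ht (hsub huA) htu⟩
      have hexp : ∀ a b, a ∈ A → b ∈ A → a ≠ b → IsProperlyExposedEdge G s(a, b) := by
        intro a b ha hb hne
        have hadj := hAcl a b ha hb hne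
        have huniq : ∀ T : Set V, IsMaxGraphClique G T → a ∈ T → b ∈ T → T = A := by
          intro T hT haT hbT
          have hTA : T ⊆ A := by
            intro t ht
            by_cases hta : t = a
            · subst hta; exact ha
            · exact ⟨a, hT.1 ht haT hta⟩
          exact hT.2 A hAcliq hTA
        refine ⟨⟨(mem_edgeSet _).mpr hadj, A, ⟨hAmax, pair_subset_iff.mpr ⟨ha, hb⟩⟩, ?_⟩, ?_⟩
        · rintro T ⟨hT, hTm⟩
          exact huniq T hT (pair_subset_iff.mp hTm).1 (pair_subset_iff.mp hTm).2
        · intro T hT hTm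
          rw [huniq T hT (pair_subset_iff.mp hTm).1 (pair_subset_iff.mp hTm).2]
          have := Set.ncard_le_ncard hKA (Set.toFinite _)
          omega
      obtain ⟨w, hwK, hwu, hwv⟩ := hw
      have hwA : w ∈ A := hKA hwK
      have a1 : ((exposedBoundary G).deleteEdges {s(u, v)}).Adj u w := by
        rw [SimpleGraph.deleteEdges_adj]
        refine ⟨bd_adj (hexp u w (hKA huK) hwA (fun h => hwu h.symm)) (fun h => hwu h.symm), ?_⟩
        simp only [Set.mem_singleton_iff]
        exact pair_ne_of hwu hwv
      have a2 : ((exposedBoundary G).deleteEdges {s(u, v)}).Adj w v := by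
        rw [SimpleGraph.deleteEdges_adj]
        refine ⟨bd_adj (hexp w v hwA (hKA hvK) hwv) hwv, ?_⟩
        simp only [Set.mem_singleton_iff]
        exact pair_ne_of' hwu hwv
      exact a1.reachable.trans a2.reachable
    · push_neg at hAcl
      obtain ⟨p, q, hpA, hqA, hpq, hnpq⟩ := hAcl
      obtain ⟨s₁, hs₁A, hr₁, hs₁q, hs₁nq⟩ :=
        dirac hch (A.ncard + 1) A (Nat.lt_succ_self _) p q hpA hqA hpq hnpq
      have toSimp : ∀ t, t ∈ A → relSimp G A t → Simp G t := by
        intro t htA hr a b h1 h2 hne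
        exact hr a b ⟨t, h1.symm⟩ ⟨t, h2.symm⟩ h1 h2 hne
      have hs : ∃ s, Simp G s ∧ (∃ w, G.Adj s w) ∧ s ≠ u ∧ s ≠ v := by
        by_cases h1 : s₁ ≠ u ∧ s₁ ≠ v
        · exact ⟨s₁, toSimp s₁ hs₁A hr₁, hs₁A, h1.1, h1.2⟩
        · obtain ⟨s₂, hs₂A, hr₂, hs₂ne, hs₂nadj⟩ :=
            dirac hch (A.ncard + 1) A (Nat.lt_succ_self _) q s₁ hqA hs₁A
              (fun h => hs₁q h.symm) (fun h => hs₁nq h.symm)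
          have h1' : s₁ = u ∨ s₁ = v := by tauto
          refine ⟨s₂, toSimp s₂ hs₂A hr₂, hs₂A, ?_, ?_⟩
          · rintro rfl
            rcases h1' with rfl | rfl
            · exact hs₂ne rfl
            · exact hs₂nadj hadjuv
          · rintro rfl
            rcases h1' with rfl | rfl
            · exact hs₂nadj hadjuv.symm
            · exact hs₂ne rfl
      obtain ⟨s, hsSimp, hsA, hsu, hsv⟩ := hs
      by_cases hsadj : G.Adj s u ∧ G.Adj s v
      · exact twostep s hsSimp hsu hsv hsadj.1 hsadj.2
      · have hsK : s ∉ K := by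
          intro hsK
          exact hsadj ⟨hK.1 hsK huK hsu, hK.1 hsK hvK hsv⟩
        have hch' : IsChordalGraph (Gr G {t | t ≠ s}) := chordal_gr hch _
        have hK' : IsMaxGraphClique (Gr G {t | t ≠ s}) K := maxclique_gr_of hK hsK
        obtain ⟨w0, hw0⟩ := hsA
        have hedge_lt : (Gr G {t | t ≠ s}).edgeSet.ncard < G.edgeSet.ncard := by
          refine Set.ncard_lt_ncard ⟨edgeSet_mono (gr_le _ _), fun hsub => ?_⟩
            (Set.toFinite _)
          have h1 : s(s, w0) ∈ G.edgeSet := (mem_edgeSet _).mpr hw0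
          have h2 := hsub h1
          exact ((mem_edgeSet _).mp h2).2.1 rfl
        have hreach' := ih (Gr G {t | t ≠ s}) (by omega) hch' K u v hK' hKcard huK hvK huv
        refine reachable_mono_adj ?_ hreach'
        intro a b hab'
        rw [SimpleGraph.deleteEdges_adj] at hab'
        obtain ⟨hab1, hab2⟩ := hab'
        rw [boundary_adj] at hab1
        obtain ⟨hpe', hne'⟩ := hab1
        have hadjG' : (Gr G {t | t ≠ s}).Adj a b := (mem_edgeSet _).mp hpe'.1.1
        have has : a ≠ s := hadjG'.2.1
        have hbs : b ≠ s := hadjG'.2.2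
        simp only [Set.mem_singleton_iff] at hab2
        by_cases hnb : G.Adj s a ∧ G.Adj s b
        · have e1 := simp_edge_exposed hsSimp hnb.1 hnb.2 hne'
          have e2 := simp_edge_exposed hsSimp hnb.2 hnb.1 (fun h => hne' h.symm)
          have c1 : ((exposedBoundary G).deleteEdges {s(u, v)}).Adj a s := by
            rw [SimpleGraph.deleteEdges_adj]
            refine ⟨bd_adj (by rw [Sym2.eq_swap]; exact e1) has, ?_⟩
            simp only [Set.mem_singleton_iff]
            exact pair_ne_of hsu hsv
          have c2 : ((exposedBoundary G).deleteEdges {s(u, v)}).Adj s b := by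
            rw [SimpleGraph.deleteEdges_adj]
            refine ⟨bd_adj e2 (fun h => hbs h.symm), ?_⟩
            simp only [Set.mem_singleton_iff]
            rw [Sym2.eq_swap]
            exact pair_ne_of hsu hsv
          exact c1.reachable.trans c2.reachable
        · have hpe : IsProperlyExposedEdge G s(a, b) := lift_exposed hsSimp hpe' hnb
          have hadjd : ((exposedBoundary G).deleteEdges {s(u, v)}).Adj a b := by
            rw [SimpleGraph.deleteEdges_adj]
            exact ⟨bd_adj hpe hne', by simpa using hab2⟩
          exact hadjd.reachable

end B17

/-- for a chordal graph `G`, the subgraph `∂G` of properly exposed edges has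
no bridges: for every edge of `∂G`, its endpoints are joined by a path in `∂G` avoiding
that edge. Equivalently, every connected component of `∂G` is 2-edge-connected. -/
theorem boundary_no_bridges (n : ℕ) (G : SimpleGraph (Fin n)) (hch : IsChordalGraph G) :
    ∀ a b : Fin n, (exposedBoundary G).Adj a b →
      ((exposedBoundary G).deleteEdges {s(a, b)}).Reachable a b := by
  intro a b hadj
  classical
  rw [B17.boundary_adj] at hadj
  obtain ⟨hpe, hne⟩ := hadj
  obtain ⟨⟨hE, S₀, hS₀, huniq⟩, hsize⟩ := hpe
  have haS₀ : a ∈ S₀ := (B17.pair_subset_iff.mp hS₀.2).1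
  have hbS₀ : b ∈ S₀ := (B17.pair_subset_iff.mp hS₀.2).2
  exact B17.main_claim (G.edgeSet.ncard + 1) G (Nat.lt_succ_self _) hch S₀ a b hS₀.1
    (hsize S₀ hS₀.1 hS₀.2) haS₀ hbS₀ hne
end
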